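/- Let P, Q have densities p, q relative to λ, and let E be measurable with α = Q(E) ∈ (0,1), β = P(Eᶜ). Then (1 − β − α)² / (α(1−α)) ≤ χ²(P‖Q), where χ²(P‖Q) = ∫_{q>0} (p−q)²/q dλ (+∞ if P(q=0) > 0). -/
import Mathlib


open MeasureTheory Set

lemma stmt_10_aux {Ω : Type*} [MeasurableSpace Ω] (μ : Measure Ω)
    (p q : Ω → ℝ) (A : Set Ω) (hA : MeasurableSet A)
    (hAS : ∀ x ∈ A, 0 < q x)
    (hpA : IntegrableOn p A μ) (hqA : IntegrableOn q A μ)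
    (hIA : IntegrableOn (fun x => (p x - q x) ^ 2 / q x) A μ)
    (a b : ℝ) (ha : 0 < a)
    (hqa : ∫ x in A, q x ∂μ = a) (hpa : ∫ x in A, p x ∂μ = b) :
    (b - a) ^ 2 / a ≤ ∫ x in A, (p x - q x) ^ 2 / q x ∂μ := by
  set c : ℝ := (b - a) / a with hc
  have hfg : Integrable (fun x => p x - q x) (μ.restrict A) := hpA.sub hqA
  have h1 : ∫ x in A, (2 * c * (p x - q x) - c ^ 2 * q x) ∂μ = (b - a) ^ 2 / a := by
    rw [integral_sub (hfg.const_mul _) (hqA.const_mul _),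
      integral_const_mul, integral_const_mul, integral_sub hpA hqA, hqa, hpa, hc]
    field_simp
    ring
  have h2 : ∫ x in A, (2 * c * (p x - q x) - c ^ 2 * q x) ∂μ
      ≤ ∫ x in A, (p x - q x) ^ 2 / q x ∂μ := by
    refine setIntegral_mono_on ((hfg.const_mul _).sub (hqA.const_mul _)) hIA hA ?_
    intro x hx
    have hq := hAS x hx
    rw [le_div_iff₀ hq]
    nlinarith [sq_nonneg (p x - q x - c * q x)]
  linarith

/-- χ²-divergence lower bound: `(1 − β − α)² / (α(1−α)) ≤ χ²(P‖Q)`. -/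
theorem stmt_10 {Ω : Type*} [MeasurableSpace Ω] (μ : Measure Ω)
    (p q : Ω → ℝ) (hpm : Measurable p) (hqm : Measurable q)
    (hp0 : ∀ x, 0 ≤ p x) (hq0 : ∀ x, 0 ≤ q x)
    (hpi : Integrable p μ) (hqi : Integrable q μ)
    (hp1 : ∫ x, p x ∂μ = 1) (hq1 : ∫ x, q x ∂μ = 1)
    -- P assigns no mass to {q = 0} (otherwise χ² = +∞ and the bound is trivial)
    (hac : ∀ᵐ x ∂μ, q x = 0 → p x = 0)
    (hInt : IntegrableOn (fun x => (p x - q x) ^ 2 / q x) {x | 0 < q x} μ)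
    (α β : ℝ) (hα : α ∈ Set.Ioo (0:ℝ) 1)
    (E : Set Ω) (hE : MeasurableSet E)
    (hαE : ∫ x in E, q x ∂μ = α) (hβE : ∫ x in Eᶜ, p x ∂μ = β) :
    (1 - β - α) ^ 2 / (α * (1 - α)) ≤
      ∫ x in {x | 0 < q x}, (p x - q x) ^ 2 / q x ∂μ := by
  obtain ⟨hα0, hα1⟩ := hα
  have hα1' : (0:ℝ) < 1 - α := by linarith
  set S : Set Ω := {x | 0 < q x} with hS
  have hSm : MeasurableSet S := measurableSet_lt measurable_const hqm
  have hqc : ∀ x, x ∉ S → q x = 0 := fun x hx => le_antisymm (not_lt.1 hx) (hq0 x)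
  -- integrals of q over T ∩ S equal integrals over T
  have hq_int : ∀ T : Set Ω, ∫ x in T ∩ S, q x ∂μ = ∫ x in T, q x ∂μ := by
    intro T
    have := integral_inter_add_diff (s := T) (t := S) (f := q) (μ := μ) hSm hqi.integrableOn
    have h0 : ∫ x in T \ S, q x ∂μ = 0 :=
      setIntegral_eq_zero_of_forall_eq_zero fun x hx => hqc x hx.2
    linarith
  -- integrals of p over T ∩ S equal integrals over T (using hac)
  have hp_int : ∀ T : Set Ω, ∫ x in T ∩ S, p x ∂μ = ∫ x in T, p x ∂μ := by
    intro T
    have := integral_inter_add_diff (s := T) (t := S) (f := p) (μ := μ) hSm hpi.integrableOn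
    have h0 : ∫ x in T \ S, p x ∂μ = 0 := by
      refine setIntegral_eq_zero_of_ae_eq_zero ?_
      filter_upwards [hac] with x hx hxT
      exact hx (hqc x hxT.2)
    linarith
  -- p integral over E
  have hpE : ∫ x in E, p x ∂μ = 1 - β := by
    have := integral_add_compl hE hpi
    rw [hβE] at this; linarith
  have hqEc : ∫ x in Eᶜ, q x ∂μ = 1 - α := by
    have := integral_add_compl hE hqi
    rw [hαE] at this; linarith
  -- positivity on intersections
  have hpos : ∀ T : Set Ω, ∀ x ∈ T ∩ S, 0 < q x := fun T x hx => hx.2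
  -- bound on E ∩ S
  have hbA : (1 - β - α) ^ 2 / α ≤ ∫ x in E ∩ S, (p x - q x) ^ 2 / q x ∂μ := by
    have h := stmt_10_aux μ p q (E ∩ S) (hE.inter hSm) (hpos E)
      (hpi.integrableOn) (hqi.integrableOn)
      (hInt.mono_set inter_subset_right) α (1 - β) hα0
      (by rw [hq_int E, hαE]) (by rw [hp_int E, hpE])
    exact h
  have hbB : (1 - β - α) ^ 2 / (1 - α) ≤ ∫ x in Eᶜ ∩ S, (p x - q x) ^ 2 / q x ∂μ := by
    have h := stmt_10_aux μ p q (Eᶜ ∩ S) (hE.compl.inter hSm) (hpos Eᶜ)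
      (hpi.integrableOn) (hqi.integrableOn)
      (hInt.mono_set inter_subset_right) (1 - α) β hα1'
      (by rw [hq_int Eᶜ, hqEc]) (by rw [hp_int Eᶜ, hβE])
    calc (1 - β - α) ^ 2 / (1 - α) = (β - (1 - α)) ^ 2 / (1 - α) := by ring_nf
      _ ≤ _ := h
  -- split the χ² integral
  have hsplit := integral_inter_add_diff (s := S) (t := E)
    (f := fun x => (p x - q x) ^ 2 / q x) (μ := μ) hE hInt
  have hSE : S ∩ E = E ∩ S := inter_comm _ _
  have hSE' : S \ E = Eᶜ ∩ S := by ext x; simp [Set.mem_diff, and_comm]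
  rw [hSE, hSE'] at hsplit
  have hsum : (1 - β - α) ^ 2 / (α * (1 - α))
      = (1 - β - α) ^ 2 / α + (1 - β - α) ^ 2 / (1 - α) := by
    field_simp
    ring
  rw [hsum]
  linarith
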